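/- Let S be a Dedekind domain, A an ideal of S, and R = S/A. For all x, y ∈ R, the principal ideals (x) and (y) are equal if and only if there exists a unit u of R with y = xu (i.e., x and y are associated). Equivalently, for every x ∈ R, the J-class xV_x of x in the multiplicative semigroup of R equals xU, where U is the group of units of R. -/

import Mathlib

section Aux

variable {S : Type*} [CommRing S] [IsDedekindDomain S]

/-- Prime avoidance via CRT: if `A ≠ ⊥`, then for any `α β : S` there is `τ`
such that `α + τ * (1 - α * β)` is a unit modulo `A`. -/
lemma exists_unit_mod {A : Ideal S} (hA : A ≠ ⊥) (α β : S) :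
    ∃ τ : S, IsUnit (Ideal.Quotient.mk A (α + τ * (1 - α * β))) := by
  set c : S := 1 - α * β with hc
  -- the finitely many primes over A
  have hA0 : A ≠ 0 := by simpa [Ideal.zero_eq_bot] using hA
  have hfin : {P : Ideal S | P ∣ A}.Finite :=
    Set.finite_coe_iff.mp
      (@Finite.of_fintype _ (UniqueFactorizationMonoid.fintypeSubtypeDvd A hA0))
  have hfin' : {P : Ideal S | P.IsPrime ∧ A ≤ P}.Finite := by
    refine hfin.subset fun P hP => ?_
    exact (Ideal.dvd_iff_le).mpr hP.2
  classical
  set s : Finset (Ideal S) := hfin'.toFinset with hs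
  have hmem : ∀ P : Ideal S, P ∈ s ↔ P.IsPrime ∧ A ≤ P := by
    intro P; rw [hs, Set.Finite.mem_toFinset]; rfl
  have hprime : ∀ P ∈ s, Prime P := by
    intro P hP
    obtain ⟨h1, h2⟩ := (hmem P).mp hP
    have hPb : P ≠ ⊥ := fun h => hA (le_bot_iff.mp (h ▸ h2))
    exact Ideal.prime_of_isPrime hPb h1
  -- choose a target for each prime
  have hchoice : ∀ P : Ideal S, P ∈ s → ∃ t : S, α + t * c ∉ P := by
    intro P hP
    obtain ⟨h1, h2⟩ := (hmem P).mp hP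
    have hPb : P ≠ ⊥ := fun h => hA (le_bot_iff.mp (h ▸ h2))
    by_cases hcP : c ∈ P
    · refine ⟨0, fun hmem' => ?_⟩
      have hα : α ∈ P := by simpa using hmem'
      have : (1 : S) ∈ P := by
        have : c + α * β ∈ P := P.add_mem hcP (P.mul_mem_right β hα)
        simpa [hc] using this
      exact h1.ne_top (Ideal.eq_top_iff_one P |>.mpr this)
    · obtain ⟨d, i, hiP, hdi⟩ := (h1.isMaximal hPb).exists_inv hcP
      refine ⟨(1 - α) * d, fun hmem' => ?_⟩
      have h1mem : (1 : S) ∈ P := by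
        have hsum : α + (1 - α) * d * c + (1 - α) * i ∈ P :=
          P.add_mem hmem' (P.mul_mem_left _ hiP)
        have he : α + (1 - α) * d * c + (1 - α) * i = 1 := by
          linear_combination (1 - α) * hdi
        rwa [he] at hsum
      exact h1.ne_top ((Ideal.eq_top_iff_one P).mpr h1mem)
  choose! t ht using hchoice
  -- CRT
  obtain ⟨τ, hτ⟩ := IsDedekindDomain.exists_forall_sub_mem_ideal (s := s) id (fun _ => 1)
    hprime (fun i _ j _ hij => hij) (fun P => t P.1)
  -- α + τ * c avoids every prime over A
  have havoid : ∀ P ∈ s, α + τ * c ∉ P := by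
    intro P hP hmem'
    have h1 := hτ P hP
    simp only [id, pow_one] at h1
    have : α + t P * c ∈ P := by
      have := P.sub_mem hmem' (P.mul_mem_right c h1)
      have h2 : α + τ * c - (τ - t P) * c = α + t P * c := by ring
      rwa [h2] at this
    exact ht P hP this
  -- hence it is a unit mod A
  have htop : Ideal.span {α + τ * c} ⊔ A = ⊤ := by
    by_contra hne
    obtain ⟨M, hM, hle⟩ := Ideal.exists_le_maximal _ hne
    have hMs : M ∈ s := (hmem M).mpr ⟨hM.isPrime, le_trans le_sup_right hle⟩
    exact havoid M hMs (hle (Ideal.mem_sup_left (Ideal.subset_span rfl)))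
  rw [Ideal.eq_top_iff_one] at htop
  obtain ⟨u, hu, m, hm, hum⟩ := Submodule.mem_sup.mp htop
  obtain ⟨w, hw⟩ := Ideal.mem_span_singleton'.mp hu
  refine ⟨τ, IsUnit.of_mul_eq_one (Ideal.Quotient.mk A w) ?_⟩
  have : Ideal.Quotient.mk A (u + m) = 1 := by rw [hum]; simp
  rw [map_add, Ideal.Quotient.eq_zero_iff_mem.mpr hm, add_zero, ← hw, map_mul] at this
  rw [mul_comm]; exact this

/-- Kaplansky: in a quotient of a Dedekind domain, equal principal ideals give
associated elements. -/
lemma assoc_of_span_eq (A : Ideal S) (x y : S ⧸ A)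
    (h : Ideal.span {x} = Ideal.span {y}) : ∃ u : (S ⧸ A)ˣ, y = x * u := by
  by_cases hA : A = ⊥
  · subst hA
    haveI : (⊥ : Ideal S).IsPrime := Ideal.bot_prime
    haveI : IsDomain (S ⧸ (⊥ : Ideal S)) := Ideal.Quotient.isDomain ⊥
    obtain ⟨u, hu⟩ := Ideal.span_singleton_eq_span_singleton.mp h
    exact ⟨u, hu.symm⟩
  · obtain ⟨a, ha⟩ := Ideal.mem_span_singleton'.mp
      (h ▸ Ideal.subset_span (Set.mem_singleton y))
    obtain ⟨b, hb⟩ := Ideal.mem_span_singleton'.mp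
      (h ▸ Ideal.subset_span (Set.mem_singleton x) : x ∈ Ideal.span {y})
    have hz : x * (1 - a * b) = 0 := by
      linear_combination (-b) * ha - hb
    obtain ⟨α, hα⟩ := Ideal.Quotient.mk_surjective a
    obtain ⟨β, hβ⟩ := Ideal.Quotient.mk_surjective b
    obtain ⟨τ, hτ⟩ := exists_unit_mod hA α β
    refine ⟨hτ.unit, ?_⟩
    rw [IsUnit.unit_spec]
    have hmk : Ideal.Quotient.mk A (α + τ * (1 - α * β))
        = a + (Ideal.Quotient.mk A τ) * (1 - a * b) := by
      rw [← hα, ← hβ]; simp [mul_sub]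
    rw [hmk]
    linear_combination -ha - (Ideal.Quotient.mk A τ) * hz

end Aux

/-- In a quotient `R = S/A` of a Dedekind domain `S`, two elements generate the
same principal ideal iff they are associated (`y = xu` for a unit `u`);
equivalently, for every `x ∈ R` the `J`-class
`xV_x = {xu : u ∈ R, ∃ v, xuv = x}` of `x` equals `xU`, where `U` is the group
of units of `R`. -/
theorem span_eq_iff_associated_in_quotient {S : Type*} [CommRing S] [IsDedekindDomain S]
    (A : Ideal S) :
    (∀ x y : S ⧸ A, Ideal.span {x} = Ideal.span {y} ↔ ∃ u : (S ⧸ A)ˣ, y = x * u) ∧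
    (∀ x : S ⧸ A,
      {z : S ⧸ A | ∃ u : S ⧸ A, (∃ v : S ⧸ A, x * u * v = x) ∧ z = x * u}
        = {z : S ⧸ A | ∃ u : (S ⧸ A)ˣ, z = x * u}) := by
  have key := assoc_of_span_eq (S := S) A
  constructor
  · intro x y
    constructor
    · exact key x y
    · rintro ⟨u, rfl⟩
      apply le_antisymm
      · rw [Ideal.span_singleton_le_span_singleton]
        exact ⟨(u⁻¹ : (S ⧸ A)ˣ), (Units.mul_inv_cancel_right x u).symm⟩
      · rw [Ideal.span_singleton_le_span_singleton]
        exact ⟨(u : S ⧸ A), rfl⟩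
  · intro x
    ext z
    simp only [Set.mem_setOf_eq]
    constructor
    · rintro ⟨u, ⟨v, hv⟩, rfl⟩
      have hspan : Ideal.span {x} = Ideal.span {x * u} := by
        apply le_antisymm
        · rw [Ideal.span_singleton_le_span_singleton]
          exact ⟨v, hv.symm⟩
        · rw [Ideal.span_singleton_le_span_singleton]
          exact ⟨u, rfl⟩
      exact key x (x * u) hspan
    · rintro ⟨u, rfl⟩
      exact ⟨u, ⟨(u⁻¹ : (S ⧸ A)ˣ), Units.mul_inv_cancel_right x u⟩, rfl⟩
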